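/- Let A be an m×n real matrix with rows a 1, …, a m and b ∈ ℝ^m. Let H : ℕ → (n×n real matrices), p : ℕ → ℝ^n and x : ℕ → ℝ^n satisfy the Huang algorithm: H 1 = I, x 1 = 0, and for every k with 1 ≤ k ≤ m: p k = H k *ᵥ (a k), (a k) ⬝ᵥ (p k) ≠ 0, x (k+1) = x k - (((a k) ⬝ᵥ (x k) - b k)/((a k) ⬝ᵥ (p k))) • p k, and H (k+1) = H k - (1/((a k) ⬝ᵥ (p k))) • vecMulVec (p k) (p k). If A *ᵥ (x (m+1)) = b, then x (m+1) is the minimum-norm solution: for every y ∈ ℝ^n with A *ᵥ y = b, (x (m+1)) ⬝ᵥ (x (m+1)) ≤ y ⬝ᵥ y. -/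
import Mathlib

open Matrix

lemma vecMulVec_mulVec' {n : ℕ} (a b v : Fin n → ℝ) :
    vecMulVec a b *ᵥ v = (b ⬝ᵥ v) • a := by
  ext i
  simp [vecMulVec, mulVec, dotProduct, Finset.sum_mul, Finset.mul_sum, mul_assoc, mul_comm, mul_left_comm]

theorem huang_gives_minimum_norm_solution {m n : ℕ}
    (A : Matrix (Fin m) (Fin n) ℝ) (b : Fin m → ℝ)
    (H : ℕ → Matrix (Fin n) (Fin n) ℝ)
    (p : ℕ → Fin n → ℝ) (x : ℕ → Fin n → ℝ)
    (hH1 : H 1 = 1) (hx1 : x 1 = 0)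
    (a : ℕ → Fin n → ℝ) (ha : ∀ k : Fin m, a (k.1 + 1) = A k)
    (β : ℕ → ℝ) (hβ : ∀ k : Fin m, β (k.1 + 1) = b k)
    (hrec : ∀ k, 1 ≤ k → k ≤ m →
      p k = H k *ᵥ a k ∧ a k ⬝ᵥ p k ≠ 0 ∧
      x (k + 1) = x k - ((a k ⬝ᵥ x k - β k) / (a k ⬝ᵥ p k)) • p k ∧
      H (k + 1) = H k - (1 / (a k ⬝ᵥ p k)) • vecMulVec (p k) (p k))
    (hsol : A *ᵥ x (m + 1) = b) :
    ∀ y : Fin n → ℝ, A *ᵥ y = b →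
      x (m + 1) ⬝ᵥ x (m + 1) ≤ y ⬝ᵥ y := by
  intro y hy
  set S : Submodule ℝ (Fin n → ℝ) := Submodule.span ℝ (Set.range fun k : Fin m => A k) with hS
  -- x (m+1) ∈ S
  have key : ∀ k, 1 ≤ k → k ≤ m + 1 →
      x k ∈ S ∧ ∀ v, H k *ᵥ v - v ∈ S := by
    intro k hk
    induction k, hk using Nat.le_induction with
    | base =>
      intro _
      refine ⟨by simp [hx1], fun v => by simp [hH1]⟩
    | succ k hk ih =>
      intro hkm
      have hkm' : k ≤ m := by omega
      obtain ⟨ihx, ihH⟩ := ih (by omega)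
      obtain ⟨hp, hd, hxr, hHr⟩ := hrec k hk hkm'
      have hak : a k ∈ S := by
        obtain ⟨k', rfl⟩ : ∃ k', k = k' + 1 := ⟨k - 1, by omega⟩
        have h3 : a (k' + 1) = A ⟨k', by omega⟩ := ha ⟨k', by omega⟩
        rw [h3]
        exact Submodule.subset_span ⟨_, rfl⟩
      have hpk : p k ∈ S := by
        have := ihH (a k)
        rw [← hp] at this
        have h2 : p k = (p k - a k) + a k := by ring
        rw [h2]; exact S.add_mem this hak
      constructor
      · rw [hxr]
        exact S.sub_mem ihx (S.smul_mem _ hpk)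
      · intro v
        rw [hHr]
        have : (H k - (1 / (a k ⬝ᵥ p k)) • vecMulVec (p k) (p k)) *ᵥ v - v
            = (H k *ᵥ v - v) - (1 / (a k ⬝ᵥ p k)) • ((p k ⬝ᵥ v) • p k) := by
          rw [sub_mulVec, smul_mulVec, vecMulVec_mulVec']
          ring
        rw [this]
        exact S.sub_mem (ihH v) (S.smul_mem _ (S.smul_mem _ hpk))
  obtain ⟨hxS, -⟩ := key (m + 1) (by omega) le_rfl
  set z : Fin n → ℝ := y - x (m + 1) with hz
  have hAz : A *ᵥ z = 0 := by
    rw [hz, mulVec_sub, hy, hsol, sub_self]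
  have horth : ∀ v ∈ S, v ⬝ᵥ z = 0 := by
    intro v hv
    induction hv using Submodule.span_induction with
    | mem v hv =>
      obtain ⟨i, rfl⟩ := hv
      have : (A *ᵥ z) i = 0 := by rw [hAz]; rfl
      exact this
    | zero => simp
    | add u w _ _ hu hw => rw [add_dotProduct, hu, hw, add_zero]
    | smul c u _ hu => rw [smul_dotProduct, hu, smul_zero]
  have hxz : x (m + 1) ⬝ᵥ z = 0 := horth _ hxS
  have hzz : (0:ℝ) ≤ z ⬝ᵥ z := by
    simp only [dotProduct]
    exact Finset.sum_nonneg fun i _ => mul_self_nonneg _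
  have hyx : y = x (m + 1) + z := by rw [hz]; ring
  rw [hyx, add_dotProduct, dotProduct_add, dotProduct_add,
    dotProduct_comm z (x (m+1)), hxz]
  linarith
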